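/- The graph polynomial is multiplicative over edge cuts meeting in at most specified vertices: if G is a graph, e' = xy an edge, and G₁, G₂ are induced subgraphs with V(G₁) ∪ V(G₂) = V(G), V(G₁) ∩ V(G₂) = {x, y}, and E(G) = E(G₁) ∪ E(G₂) with E(G₁) ∩ E(G₂) = {e'}, then P_{G − e'}(x) = P_{G₁ − e'}(x) · P_{G₂ − e'}(x). -/

import Mathlib

open MvPolynomial

/-- The graph polynomial `P_G(x) = ∏_{uv ∈ E(G), u < v} (x_v - x_u)` over `ℤ`. -/
noncomputable def graphPoly {V : Type*} [Fintype V] [LinearOrder V] (G : SimpleGraph V) :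
    MvPolynomial V ℤ :=
  open scoped Classical in
  ∏ p ∈ Finset.univ.filter (fun p : V × V => p.1 < p.2 ∧ G.Adj p.1 p.2),
    (X p.2 - X p.1)

/-- The subgraph of `G` induced on the vertex set `A` (viewed as a graph on all of `V`,
with no edges leaving `A`). -/
def SimpleGraph.restrictTo {V : Type*} (G : SimpleGraph V) (A : Set V) : SimpleGraph V where
  Adj u v := G.Adj u v ∧ u ∈ A ∧ v ∈ A
  symm := ⟨by rintro u v ⟨h, ha, hb⟩; exact ⟨h.symm, hb, ha⟩⟩
  loopless := ⟨by rintro v ⟨h, -, -⟩; exact G.irrefl h⟩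

/-- The graph polynomial is multiplicative over edge cuts meeting in at most two specified
vertices: if `e' = xy` is an edge and `G₁ = G[A]`, `G₂ = G[B]` are induced subgraphs with
`A ∪ B = V`, `A ∩ B = {x, y}` and every edge of `G` lies in `G₁` or `G₂`, then
`P_{G - e'} = P_{G₁ - e'} · P_{G₂ - e'}`. -/
theorem graphPoly_mul_of_cut {V : Type*} [Fintype V] [LinearOrder V]
    (G : SimpleGraph V) (x y : V) (hxy : G.Adj x y) (A B : Set V)
    (hUnion : A ∪ B = Set.univ) (hInter : A ∩ B = {x, y})
    (hEdges : ∀ u v, G.Adj u v → (u ∈ A ∧ v ∈ A) ∨ (u ∈ B ∧ v ∈ B)) :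
    graphPoly (G.deleteEdges {s(x, y)}) =
      graphPoly ((G.restrictTo A).deleteEdges {s(x, y)}) *
        graphPoly ((G.restrictTo B).deleteEdges {s(x, y)}) := by
  classical
  simp only [graphPoly]
  rw [← Finset.prod_union]
  · apply Finset.prod_congr _ (fun _ _ => rfl)
    ext ⟨u, v⟩
    simp only [Finset.mem_filter, Finset.mem_union, Finset.mem_univ, true_and,
      SimpleGraph.deleteEdges_adj, SimpleGraph.restrictTo, Set.mem_singleton_iff]
    constructor
    · rintro ⟨hlt, hadj, hne⟩
      rcases hEdges u v hadj with h | h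
      · exact Or.inl ⟨hlt, ⟨hadj, h⟩, hne⟩
      · exact Or.inr ⟨hlt, ⟨hadj, h⟩, hne⟩
    · rintro (⟨hlt, ⟨hadj, _⟩, hne⟩ | ⟨hlt, ⟨hadj, _⟩, hne⟩) <;> exact ⟨hlt, hadj, hne⟩
  · rw [Finset.disjoint_left]
    rintro ⟨u, v⟩ h1 h2
    simp only [Finset.mem_filter, Finset.mem_univ, true_and,
      SimpleGraph.deleteEdges_adj, SimpleGraph.restrictTo, Set.mem_singleton_iff] at h1 h2
    obtain ⟨hlt, ⟨hadj, huA, hvA⟩, hne⟩ := h1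
    obtain ⟨-, ⟨-, huB, hvB⟩, -⟩ := h2
    have hu : u ∈ ({x, y} : Set V) := hInter ▸ ⟨huA, huB⟩
    have hv : v ∈ ({x, y} : Set V) := hInter ▸ ⟨hvA, hvB⟩
    apply hne
    rcases hu with rfl | rfl <;> rcases hv with rfl | rfl
    · exact absurd rfl hlt.ne
    · rfl
    · exact Sym2.eq_swap
    · exact absurd rfl hlt.ne
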